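/- Let W be the Weierstrass curve y² = x³ − (g₂/4)x − (g₃/4) over the rational function field ℚ(t), where g₂ = (4/3)t⁸(1 + t² + t⁴)²(1 + t² + 4t⁴ + t⁶ + 7t⁸ + t¹⁰ + 4t¹² + t¹⁴ + t¹⁶) and g₃ = −(4/27)t¹²(1 + t² + t⁴)⁴(2 + t² + 3t⁴ + 15t⁶ − 9t⁸ + 30t¹⁰ − 9t¹² + 15t¹⁴ + 3t¹⁶ + t¹⁸ + 2t²⁰). Let P be the point on W with x-coordinate X_P = −t⁴(1 + t² + t⁴)²(2 − 5t² − 2t⁴ − 2t⁶ − 2t⁸ − 5t¹⁰ + 2t¹²)/(3(1 + t²)⁴) and y-coordinate Y_P/2, where Y_P = 4t⁷(1 + t² + t⁴)²(1 + t² + 2t⁴ + 2t⁶ + 3t⁸ + 2t¹⁰ + 3t¹² + 2t¹⁴ + 2t¹⁶ + t¹⁸ + t²⁰)/(1 + t²)⁶. Then P has infinite order in the group W(ℚ(t)): for every positive integer n, n • P ≠ O. In particular, W(ℚ(t)) has rank at least 1. -/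

import Mathlib

noncomputable section InfOrdAux

open Polynomial

namespace InfOrd

/-- Residue predicate: the rational function `f` over `ℚ` has value `c` at `t = i`
(no pole there), where we compute in `ℂ`. -/
def Res (f : RatFunc ℚ) (c : ℂ) : Prop :=
  ∃ a b : Polynomial ℚ, (aeval Complex.I) b ≠ 0 ∧
    f * algebraMap (Polynomial ℚ) (RatFunc ℚ) b = algebraMap (Polynomial ℚ) (RatFunc ℚ) a ∧
    (aeval Complex.I) a = c * (aeval Complex.I) b

lemma Res.poly (p : Polynomial ℚ) :
    Res (algebraMap (Polynomial ℚ) (RatFunc ℚ) p) ((aeval Complex.I) p) :=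
  ⟨p, 1, by simp, by simp, by simp⟩

lemma Res.congr {f g : RatFunc ℚ} {c d : ℂ} (h : Res f c) (hfg : f = g) (hcd : c = d) :
    Res g d := hfg ▸ hcd ▸ h

lemma Res.mul {f g : RatFunc ℚ} {c d : ℂ} (hf : Res f c) (hg : Res g d) :
    Res (f * g) (c * d) := by
  obtain ⟨a₁, b₁, hb₁, he₁, hv₁⟩ := hf
  obtain ⟨a₂, b₂, hb₂, he₂, hv₂⟩ := hg
  refine ⟨a₁ * a₂, b₁ * b₂, by simpa using ⟨hb₁, hb₂⟩, ?_, ?_⟩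
  · rw [map_mul, map_mul, ← he₁, ← he₂]; ring
  · rw [map_mul, map_mul, hv₁, hv₂]; ring

lemma Res.add {f g : RatFunc ℚ} {c d : ℂ} (hf : Res f c) (hg : Res g d) :
    Res (f + g) (c + d) := by
  obtain ⟨a₁, b₁, hb₁, he₁, hv₁⟩ := hf
  obtain ⟨a₂, b₂, hb₂, he₂, hv₂⟩ := hg
  refine ⟨a₁ * b₂ + a₂ * b₁, b₁ * b₂, by simpa using ⟨hb₁, hb₂⟩, ?_, ?_⟩
  · rw [map_mul, map_add, map_mul, map_mul, ← he₁, ← he₂]; ring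
  · rw [map_add, map_mul, map_mul, map_mul, hv₁, hv₂]; ring

lemma Res.neg {f : RatFunc ℚ} {c : ℂ} (hf : Res f c) : Res (-f) (-c) := by
  obtain ⟨a₁, b₁, hb₁, he₁, hv₁⟩ := hf
  exact ⟨-a₁, b₁, hb₁, by rw [map_neg, ← he₁]; ring, by rw [map_neg, hv₁]; ring⟩

lemma Res.sub {f g : RatFunc ℚ} {c d : ℂ} (hf : Res f c) (hg : Res g d) :
    Res (f - g) (c - d) := by
  simpa [sub_eq_add_neg] using hf.add hg.neg

lemma Res.ne_zero {f : RatFunc ℚ} {c : ℂ} (hf : Res f c) (hc : c ≠ 0) : f ≠ 0 := by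
  obtain ⟨a₁, b₁, hb₁, he₁, hv₁⟩ := hf
  intro h0
  rw [h0, zero_mul] at he₁
  have ha : a₁ = 0 := by
    apply RatFunc.algebraMap_injective ℚ
    rw [map_zero, he₁]
  rw [ha, map_zero] at hv₁
  exact hc (by
    have := hv₁.symm
    rcases mul_eq_zero.mp this with h | h
    · exact h
    · exact absurd h hb₁)

lemma Res.inv {f : RatFunc ℚ} {c : ℂ} (hf : Res f c) (hc : c ≠ 0) : Res f⁻¹ c⁻¹ := by
  have hf0 : f ≠ 0 := hf.ne_zero hc
  obtain ⟨a₁, b₁, hb₁, he₁, hv₁⟩ := hf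
  have ha : (aeval Complex.I) a₁ ≠ 0 := by rw [hv₁]; exact mul_ne_zero hc hb₁
  refine ⟨b₁, a₁, ha, ?_, ?_⟩
  · rw [← he₁]
    field_simp
  · rw [hv₁]
    field_simp

lemma Res.div {f g : RatFunc ℚ} {c d : ℂ} (hf : Res f c) (hg : Res g d) (hd : d ≠ 0) :
    Res (f / g) (c / d) := by
  simpa [div_eq_mul_inv] using hf.mul (hg.inv hd)

lemma Res.unique {f : RatFunc ℚ} {c d : ℂ} (hf : Res f c) (hg : Res f d) : c = d := by
  obtain ⟨a₁, b₁, hb₁, he₁, hv₁⟩ := hf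
  obtain ⟨a₂, b₂, hb₂, he₂, hv₂⟩ := hg
  have key : a₁ * b₂ = a₂ * b₁ := by
    apply RatFunc.algebraMap_injective ℚ
    rw [map_mul, map_mul, ← he₁, ← he₂]; ring
  have := congrArg (aeval Complex.I) key
  rw [map_mul, map_mul, hv₁, hv₂] at this
  have hb : (aeval Complex.I) b₁ * (aeval Complex.I) b₂ ≠ 0 := mul_ne_zero hb₁ hb₂
  apply mul_right_cancel₀ hb
  rw [show c * ((aeval Complex.I) b₁ * (aeval Complex.I) b₂) = c * (aeval Complex.I) b₁ * (aeval Complex.I) b₂ by ring, this]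
  ring

end InfOrd
namespace InfOrd

open Polynomial WeierstrassCurve WeierstrassCurve.Affine

noncomputable def t : RatFunc ℚ := RatFunc.X

noncomputable def g₂ : RatFunc ℚ :=
  (4 / 3) * t ^ 8 * (1 + t ^ 2 + t ^ 4) ^ 2 *
    (1 + t ^ 2 + 4 * t ^ 4 + t ^ 6 + 7 * t ^ 8 + t ^ 10 + 4 * t ^ 12
      + t ^ 14 + t ^ 16)

noncomputable def g₃ : RatFunc ℚ :=
  -(4 / 27) * t ^ 12 * (1 + t ^ 2 + t ^ 4) ^ 4 *
    (2 + t ^ 2 + 3 * t ^ 4 + 15 * t ^ 6 - 9 * t ^ 8 + 30 * t ^ 10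
      - 9 * t ^ 12 + 15 * t ^ 14 + 3 * t ^ 16 + t ^ 18 + 2 * t ^ 20)

noncomputable def X_P : RatFunc ℚ :=
  -t ^ 4 * (1 + t ^ 2 + t ^ 4) ^ 2 *
    (2 - 5 * t ^ 2 - 2 * t ^ 4 - 2 * t ^ 6 - 2 * t ^ 8 - 5 * t ^ 10
      + 2 * t ^ 12) / (3 * (1 + t ^ 2) ^ 4)

noncomputable def Y_P : RatFunc ℚ :=
  4 * t ^ 7 * (1 + t ^ 2 + t ^ 4) ^ 2 *
    (1 + t ^ 2 + 2 * t ^ 4 + 2 * t ^ 6 + 3 * t ^ 8 + 2 * t ^ 10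
      + 3 * t ^ 12 + 2 * t ^ 14 + 2 * t ^ 16 + t ^ 18 + t ^ 20) /
    (1 + t ^ 2) ^ 6

noncomputable def W : WeierstrassCurve.Affine (RatFunc ℚ) :=
  { a₁ := 0, a₂ := 0, a₃ := 0, a₄ := -g₂ / 4, a₆ := -g₃ / 4 }

@[simp] lemma W_a₁ : W.a₁ = 0 := rfl
@[simp] lemma W_a₂ : W.a₂ = 0 := rfl
@[simp] lemma W_a₃ : W.a₃ = 0 := rfl
lemma W_a₄ : W.a₄ = -g₂ / 4 := rfl
lemma W_a₆ : W.a₆ = -g₃ / 4 := rfl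

instance : CharZero (RatFunc ℚ) :=
  charZero_of_injective_algebraMap (RatFunc.algebraMap_injective ℚ)

/-- the uniformizer at the prime `1 + t²`. -/
noncomputable def π : RatFunc ℚ := 1 + t ^ 2

lemma hπ : π ≠ 0 := by
  have : π = algebraMap (Polynomial ℚ) (RatFunc ℚ) (1 + X ^ 2) := by
    simp [π, t, map_add, map_pow, RatFunc.algebraMap_X]
  rw [this]
  rw [ne_eq, map_eq_zero_iff _ (RatFunc.algebraMap_injective ℚ)]
  intro h
  have := congrArg (fun p => Polynomial.coeff p 0) h
  simp at this

lemma hπt : (1 + t ^ 2 : RatFunc ℚ) ≠ 0 := hπ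

lemma hπX : (1 + RatFunc.X ^ 2 : RatFunc ℚ) ≠ 0 := hπ

noncomputable def Npoly : Polynomial ℚ :=
  -X ^ 4 * (1 + X ^ 2 + X ^ 4) ^ 2 *
    (2 - 5 * X ^ 2 - 2 * X ^ 4 - 2 * X ^ 6 - 2 * X ^ 8 - 5 * X ^ 10 + 2 * X ^ 12)

noncomputable def Mpoly : Polynomial ℚ :=
  2 * X ^ 7 * (1 + X ^ 2 + X ^ 4) ^ 2 *
    (1 + X ^ 2 + 2 * X ^ 4 + 2 * X ^ 6 + 3 * X ^ 8 + 2 * X ^ 10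
      + 3 * X ^ 12 + 2 * X ^ 14 + 2 * X ^ 16 + X ^ 18 + X ^ 20)

noncomputable def A4poly : Polynomial ℚ :=
  -((1 + X ^ 2) ^ 8 * X ^ 8 * (1 + X ^ 2 + X ^ 4) ^ 2 *
    (1 + X ^ 2 + 4 * X ^ 4 + X ^ 6 + 7 * X ^ 8 + X ^ 10 + 4 * X ^ 12 + X ^ 14 + X ^ 16))

lemma div_helper (a b c d : RatFunc ℚ) : a * (b / c) * d = a * b * d / c := by ring

lemma div_helper' (a b c : RatFunc ℚ) : a * (b / c) = a * b / c := by ring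

end InfOrd
namespace InfOrd

open Polynomial WeierstrassCurve WeierstrassCurve.Affine

noncomputable def A6poly : Polynomial ℚ :=
  (1 + X ^ 2) ^ 12 * X ^ 12 * (1 + X ^ 2 + X ^ 4) ^ 4 *
    (2 + X ^ 2 + 3 * X ^ 4 + 15 * X ^ 6 - 9 * X ^ 8 + 30 * X ^ 10
      - 9 * X ^ 12 + 15 * X ^ 14 + 3 * X ^ 16 + X ^ 18 + 2 * X ^ 20)

lemma cert_X : 3 * (π ^ 4 * X_P) = algebraMap (Polynomial ℚ) (RatFunc ℚ) Npoly := by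
  simp only [Npoly, π, X_P, t, map_mul, map_add, map_sub, map_neg, map_pow, map_one,
    map_ofNat, RatFunc.algebraMap_X]
  rw [mul_comm, div_helper, div_eq_iff (mul_ne_zero (by norm_num) (pow_ne_zero _ hπX))]
  ring

lemma cert_Y : π ^ 6 * (Y_P / 2) = algebraMap (Polynomial ℚ) (RatFunc ℚ) Mpoly := by
  simp only [Mpoly, π, Y_P, t, map_mul, map_add, map_sub, map_neg, map_pow, map_one,
    map_ofNat, RatFunc.algebraMap_X]
  rw [div_div, div_helper', div_eq_iff (mul_ne_zero (pow_ne_zero _ hπX) (by norm_num))]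
  ring

lemma cert_A4 : 3 * (π ^ 8 * W.a₄) = algebraMap (Polynomial ℚ) (RatFunc ℚ) A4poly := by
  simp only [A4poly, W_a₄, g₂, π, t, map_mul, map_add, map_sub, map_neg, map_pow, map_one,
    map_ofNat, RatFunc.algebraMap_X]
  field_simp

lemma cert_A6 : 27 * (π ^ 12 * W.a₆) = algebraMap (Polynomial ℚ) (RatFunc ℚ) A6poly := by
  simp only [A6poly, W_a₆, g₃, π, t, map_mul, map_add, map_sub, map_neg, map_pow, map_one,
    map_ofNat, RatFunc.algebraMap_X]
  field_simp

lemma res_XP : Res (π ^ 4 * X_P) (-4) := by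
  refine ⟨Npoly, 3, by rw [map_ofNat]; norm_num, ?_, ?_⟩
  · rw [map_ofNat]
    linear_combination cert_X
  · simp only [Npoly, map_mul, map_add, map_sub, map_neg, map_pow, map_one, map_ofNat, aeval_X]
    linear_combination ((12 : ℂ) + (-12 : ℂ) * Complex.I ^ 2 + (10 : ℂ) * Complex.I ^ 4 + (-9 : ℂ) * Complex.I ^ 6 + (15 : ℂ) * Complex.I ^ 8 + (2 : ℂ) * Complex.I ^ 10 + (18 : ℂ) * Complex.I ^ 12 + (6 : ℂ) * Complex.I ^ 14 + (14 : ℂ) * Complex.I ^ 16 + (3 : ℂ) * Complex.I ^ 18 + (3 : ℂ) * Complex.I ^ 20 + (-2 : ℂ) * Complex.I ^ 22) * Complex.I_sq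

lemma res_YP : Res (π ^ 6 * (Y_P / 2)) (-8 * Complex.I) := by
  refine ⟨Mpoly, 1, by norm_num, ?_, ?_⟩
  · rw [map_one, mul_one]
    exact cert_Y
  · simp only [Mpoly, map_mul, map_add, map_sub, map_neg, map_pow, map_one, map_ofNat,
      aeval_X, mul_one]
    linear_combination ((8 : ℂ) * Complex.I + (-8 : ℂ) * Complex.I ^ 3 + (8 : ℂ) * Complex.I ^ 5 + (-6 : ℂ) * Complex.I ^ 7 + (12 : ℂ) * Complex.I ^ 9 + (2 : ℂ) * Complex.I ^ 11 + (20 : ℂ) * Complex.I ^ 13 + (12 : ℂ) * Complex.I ^ 15 + (26 : ℂ) * Complex.I ^ 17 + (18 : ℂ) * Complex.I ^ 19 + (26 : ℂ) * Complex.I ^ 21 + (18 : ℂ) * Complex.I ^ 23 + (20 : ℂ) * Complex.I ^ 25 + (12 : ℂ) * Complex.I ^ 27 + (10 : ℂ) * Complex.I ^ 29 + (4 : ℂ) * Complex.I ^ 31 + (2 : ℂ) * Complex.I ^ 33) * Complex.I_sq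

lemma res_A4 : Res (π ^ 8 * W.a₄) 0 := by
  refine ⟨A4poly, 3, by rw [map_ofNat]; norm_num, ?_, ?_⟩
  · rw [map_ofNat]
    linear_combination cert_A4
  · simp only [A4poly, map_mul, map_add, map_sub, map_neg, map_pow, map_one, map_ofNat, aeval_X]
    rw [zero_mul]
    linear_combination ((-1 : ℂ) * Complex.I ^ 8 + (-10 : ℂ) * Complex.I ^ 10 + (-51 : ℂ) * Complex.I ^ 12 + (-175 : ℂ) * Complex.I ^ 14 + (-451 : ℂ) * Complex.I ^ 16 + (-930 : ℂ) * Complex.I ^ 18 + (-1601 : ℂ) * Complex.I ^ 20 + (-2366 : ℂ) * Complex.I ^ 22 + (-3051 : ℂ) * Complex.I ^ 24 + (-3460 : ℂ) * Complex.I ^ 26 + (-3460 : ℂ) * Complex.I ^ 28 + (-3051 : ℂ) * Complex.I ^ 30 + (-2366 : ℂ) * Complex.I ^ 32 + (-1601 : ℂ) * Complex.I ^ 34 + (-930 : ℂ) * Complex.I ^ 36 + (-451 : ℂ) * Complex.I ^ 38 + (-175 : ℂ) * Complex.I ^ 40 + (-51 : ℂ) * Complex.I ^ 42 + (-10 : ℂ)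 * Complex.I ^ 44 + (-1 : ℂ) * Complex.I ^ 46) * Complex.I_sq

lemma yP_ne_zero : (Y_P / 2 : RatFunc ℚ) ≠ 0 := by
  have h := res_YP.ne_zero (by
    intro h
    have := congrArg Complex.im h
    simp at this)
  intro h0
  rw [h0, mul_zero] at h
  exact h rfl

set_option maxHeartbeats 2000000 in
lemma key_eq : 27 * (π ^ 6 * (Y_P / 2)) ^ 2 =
    (3 * (π ^ 4 * X_P)) ^ 3 + 3 * ((3 * (π ^ 8 * W.a₄)) * (3 * (π ^ 4 * X_P)))
      + 27 * (π ^ 12 * W.a₆) := by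
  have poly_id : (27 : Polynomial ℚ) * Mpoly ^ 2
      = Npoly ^ 3 + 3 * (A4poly * Npoly) + A6poly := by
    simp only [Npoly, Mpoly, A4poly, A6poly]
    ring
  have himg := congrArg (algebraMap (Polynomial ℚ) (RatFunc ℚ)) poly_id
  simp only [map_mul, map_pow, map_add, map_ofNat] at himg
  rw [cert_X, cert_Y, cert_A4, cert_A6]
  linear_combination himg

set_option maxHeartbeats 1000000 in
lemma equation_P : W.Equation X_P (Y_P / 2) := by
  rw [WeierstrassCurve.Affine.equation_iff]
  simp only [W_a₁, W_a₂, W_a₃]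
  apply mul_left_cancel₀ (a := 27 * π ^ 12)
    (mul_ne_zero (by norm_num) (pow_ne_zero _ hπ))
  linear_combination key_eq

lemma nonsingular_P : W.Nonsingular X_P (Y_P / 2) := by
  rw [WeierstrassCurve.Affine.nonsingular_iff]
  refine ⟨equation_P, Or.inr ?_⟩
  show Y_P / 2 ≠ W.negY X_P (Y_P / 2)
  rw [WeierstrassCurve.Affine.negY]
  simp only [W_a₁, W_a₃, zero_mul, sub_zero]
  intro h
  apply yP_ne_zero
  have h2 : (2 : RatFunc ℚ) * (Y_P / 2) = 0 := by linear_combination h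
  rcases mul_eq_zero.mp h2 with h | h
  · norm_num at h
  · exact h

end InfOrd
namespace InfOrd

open Polynomial WeierstrassCurve WeierstrassCurve.Affine

/-- residue of the `x`-coordinate of `n • P` (normalized by `π⁴`). -/
noncomputable def cc (n : ℕ) : ℂ := -4 / (n : ℂ) ^ 2
/-- residue of the `y`-coordinate of `n • P` (normalized by `π⁶`). -/
noncomputable def dd (n : ℕ) : ℂ := -8 * Complex.I / (n : ℂ) ^ 3

lemma cc_one : cc 1 = -4 := by simp [cc]
lemma dd_one : dd 1 = -8 * Complex.I := by simp [dd]

lemma resX1 : Res (π ^ 4 * X_P) (cc 1) := res_XP.congr rfl cc_one.symm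
lemma resY1 : Res (π ^ 6 * (Y_P / 2)) (dd 1) := res_YP.congr rfl dd_one.symm

lemma res2 : Res (2 : RatFunc ℚ) 2 :=
  ⟨2, 1, by norm_num, by rw [map_one, map_ofNat, mul_one], by rw [map_ofNat, map_one]; norm_num⟩

lemma res3 : Res (3 : RatFunc ℚ) 3 :=
  ⟨3, 1, by norm_num, by rw [map_one, map_ofNat, mul_one], by rw [map_ofNat, map_one]; norm_num⟩

/-- normalized residues of coordinates of a sum of points through the group law. -/
lemma res_addXY {x₁ y₁ x₂ L : RatFunc ℚ} {c₁ d₁ c₂ Λ : ℂ}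
    (h₁ : Res (π ^ 4 * x₁) c₁) (h₂ : Res (π ^ 4 * x₂) c₂)
    (hy₁ : Res (π ^ 6 * y₁) d₁) (hL : Res (π ^ 2 * L) Λ) :
    Res (π ^ 4 * W.addX x₁ x₂ L) (Λ * Λ - c₁ - c₂) ∧
    Res (π ^ 6 * W.addY x₁ x₂ y₁ L) (-(Λ * (Λ * Λ - c₁ - c₂ - c₁) + d₁)) := by
  have hX : π ^ 4 * W.addX x₁ x₂ L = (π ^ 2 * L) * (π ^ 2 * L) - π ^ 4 * x₁ - π ^ 4 * x₂ := by
    simp only [addX, W_a₁, W_a₂]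
    ring
  have rX := (((hL.mul hL).sub h₁).sub h₂).congr hX.symm rfl
  refine ⟨rX, ?_⟩
  have hY : π ^ 6 * W.addY x₁ x₂ y₁ L
      = -((π ^ 2 * L) * (π ^ 4 * W.addX x₁ x₂ L - π ^ 4 * x₁) + π ^ 6 * y₁) := by
    simp only [addY, negAddY, negY, W_a₁, W_a₃]
    ring
  exact (((hL.mul (rX.sub h₁)).add hy₁).neg).congr hY.symm rfl

lemma ydbl_ne : (Y_P / 2 : RatFunc ℚ) ≠ W.negY X_P (Y_P / 2) := by
  rw [WeierstrassCurve.Affine.negY]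
  simp only [W_a₁, W_a₃, zero_mul, sub_zero]
  intro h
  apply yP_ne_zero
  have h2 : (2 : RatFunc ℚ) * (Y_P / 2) = 0 := by linear_combination h
  rcases mul_eq_zero.mp h2 with h | h
  · norm_num at h
  · exact h

noncomputable def Q : W.Point := Point.some _ _ nonsingular_P

open Classical in
lemma key (n : ℕ) (hn : 1 ≤ n) :
    ∃ (x y : RatFunc ℚ) (h : W.Nonsingular x y),
      n • Q = Point.some _ _ h ∧ Res (π ^ 4 * x) (cc n) ∧ Res (π ^ 6 * y) (dd n) := by
  induction n, hn using Nat.le_induction with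
  | base => exact ⟨X_P, Y_P / 2, nonsingular_P, one_smul _ _, resX1, resY1⟩
  | succ n hn ih =>
    obtain ⟨x, y, h, hQ, hx, hy⟩ := ih
    by_cases hn1 : n = 1
    · -- doubling step
      subst hn1
      rw [one_smul] at hQ
      injection hQ.symm with hx' hy'
      subst hx' hy'
      set L := W.slope X_P X_P (Y_P / 2) (Y_P / 2) with hLdef
      have hLf : L = (3 * X_P ^ 2 + 2 * W.a₂ * X_P + W.a₄ - W.a₁ * (Y_P / 2))
          / ((Y_P / 2) - W.negY X_P (Y_P / 2)) := slope_of_Y_ne rfl ydbl_ne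
      have hden2 : 2 * (π ^ 6 * (Y_P / 2)) ≠ 0 :=
        mul_ne_zero two_ne_zero (mul_ne_zero (pow_ne_zero _ hπ) yP_ne_zero)
      have hslope : π ^ 2 * L
          = (3 * (π ^ 4 * X_P) * (π ^ 4 * X_P) + π ^ 8 * W.a₄) / (2 * (π ^ 6 * (Y_P / 2))) := by
        rw [hLf, div_helper', div_eq_div_iff (sub_ne_zero.mpr ydbl_ne) hden2]
        simp only [negY, W_a₁, W_a₂, W_a₃]
        ring
      have hdd1 : (2 : ℂ) * dd 1 ≠ 0 := by
        rw [dd_one]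
        intro hc
        have := congrArg Complex.im hc
        simp at this
      have rnum : Res (3 * (π ^ 4 * X_P) * (π ^ 4 * X_P) + π ^ 8 * W.a₄)
          (3 * cc 1 * cc 1 + 0) := ((res3.mul resX1).mul resX1).add res_A4
      have rden : Res (2 * (π ^ 6 * (Y_P / 2))) (2 * dd 1) := res2.mul resY1
      have hdd1' : (2 : ℂ) * (-8 * Complex.I) ≠ 0 := by
        rw [dd_one] at hdd1
        exact hdd1
      have hval : (3 * cc 1 * cc 1 + 0) / (2 * dd 1) = 3 * Complex.I := by
        rw [cc_one, dd_one, div_eq_iff hdd1']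
        linear_combination (48 : ℂ) * Complex.I_sq
      have resL : Res (π ^ 2 * L) (3 * Complex.I) :=
        ((rnum.div rden hdd1).congr hslope.symm hval)
      obtain ⟨rX, rY⟩ := res_addXY resX1 resX1 resY1 resL
      refine ⟨_, _, nonsingular_add nonsingular_P nonsingular_P (fun e => ydbl_ne e.2),
        ?_, rX.congr rfl ?_, rY.congr rfl ?_⟩
      · rw [succ_nsmul, one_smul, Q]
        exact Point.add_of_Y_ne ydbl_ne
      · show 3 * Complex.I * (3 * Complex.I) - cc 1 - cc 1 = cc 2
        rw [cc_one, show cc 2 = -1 by rw [cc]; push_cast; norm_num]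
        linear_combination (9 : ℂ) * Complex.I_sq
      · show -(3 * Complex.I * (3 * Complex.I * (3 * Complex.I) - cc 1 - cc 1 - cc 1) + dd 1)
            = dd 2
        rw [cc_one, dd_one, show dd 2 = -Complex.I by rw [dd]; push_cast; ring]
        linear_combination (-27 * Complex.I) * Complex.I_sq
    · -- generic step, n ≥ 2
      have hn2 : 2 ≤ n := by omega
      have hN : ((n : ℂ)) ≠ 0 := Nat.cast_ne_zero.mpr (by omega)
      have hN1 : ((n : ℂ)) + 1 ≠ 0 := by
        have : (((n + 1 : ℕ)) : ℂ) ≠ 0 := Nat.cast_ne_zero.mpr (by omega)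
        push_cast at this
        exact this
      have hcd : cc n - cc 1 ≠ 0 := by
        rw [cc_one, sub_ne_zero, cc]
        intro hc
        rw [div_eq_iff (pow_ne_zero _ hN)] at hc
        have h1 : ((n : ℂ)) ^ 2 = 1 := by linear_combination (1/4 : ℂ) * hc
        have h2 : ((n ^ 2 : ℕ) : ℂ) = ((1 : ℕ) : ℂ) := by push_cast; linear_combination h1
        have := Nat.cast_injective (R := ℂ) h2
        nlinarith
      have hneR : π ^ 4 * x - π ^ 4 * X_P ≠ 0 := (hx.sub resX1).ne_zero hcd
      have hxne : x ≠ X_P := fun e => hneR (by rw [e]; ring)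
      set L := W.slope x X_P y (Y_P / 2) with hLdef
      have hLf : L = (y - Y_P / 2) / (x - X_P) := slope_of_X_ne hxne
      have hslope : π ^ 2 * L
          = (π ^ 6 * y - π ^ 6 * (Y_P / 2)) / (π ^ 4 * x - π ^ 4 * X_P) := by
        rw [hLf, div_helper', div_eq_div_iff (sub_ne_zero.mpr hxne) hneR]
        ring
      have h1 : (n : ℂ) * ((n : ℂ))⁻¹ = 1 := mul_inv_cancel₀ hN
      have h2 : ((n : ℂ) + 1) * ((n : ℂ) + 1)⁻¹ = 1 := mul_inv_cancel₀ hN1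
      have h4 : ((n : ℂ))⁻¹ * ((n : ℂ) + 1)⁻¹ + ((n : ℂ) + 1)⁻¹ - ((n : ℂ))⁻¹ = 0 := by
        linear_combination ((n : ℂ))⁻¹ * h2 - ((n : ℂ) + 1)⁻¹ * h1
      have e_ccn : cc n = -4 * ((n : ℂ)⁻¹) ^ 2 := by
        rw [cc, div_eq_mul_inv, ← inv_pow]
      have e_ddn : dd n = -8 * Complex.I * ((n : ℂ)⁻¹) ^ 3 := by
        rw [dd, div_eq_mul_inv, ← inv_pow]
      have e_ccs : cc (n + 1) = -4 * (((n : ℂ) + 1)⁻¹) ^ 2 := by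
        rw [cc]; push_cast; rw [div_eq_mul_inv, ← inv_pow]
      have e_dds : dd (n + 1) = -8 * Complex.I * (((n : ℂ) + 1)⁻¹) ^ 3 := by
        rw [dd]; push_cast; rw [div_eq_mul_inv, ← inv_pow]
      have hval : (dd n - dd 1) / (cc n - cc 1)
          = 2 * Complex.I * ((n : ℂ) ^ 2 + (n : ℂ) + 1) * ((n : ℂ)⁻¹ * ((n : ℂ) + 1)⁻¹) := by
        rw [div_eq_iff hcd, e_ddn, dd_one, e_ccn, cc_one]
        linear_combination ((-8 : ℂ) * ((n:ℂ)+1)⁻¹ * Complex.I + (8 : ℂ) * (n:ℂ)⁻¹ * ((n:ℂ)+1)⁻¹ * Complex.I + (8 : ℂ) * (n:ℂ)⁻¹ ^ 2 * ((n:ℂ)+1)⁻¹ * Complex.I + (-8 : ℂ) * (n:ℂ) * ((n:ℂ)+1)⁻¹ * Complex.I + (8 : ℂ) * (n:ℂ) * (n:ℂ)⁻¹ ^ 2 * ((n:ℂ)+1)⁻¹ * Complex.I) * h1 + ((-8 : ℂ) * Complex.I) * h2 + ((0:ℂ)) * Complex.I_sq + ((8 : ℂ) * (n:ℂ)⁻¹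 ^ 2 * Complex.I) * h4
      have resL : Res (π ^ 2 * L)
          (2 * Complex.I * ((n : ℂ) ^ 2 + (n : ℂ) + 1) * ((n : ℂ)⁻¹ * ((n : ℂ) + 1)⁻¹)) :=
        (((hy.sub resY1).div (hx.sub resX1) hcd).congr hslope.symm hval)
      obtain ⟨rX, rY⟩ := res_addXY hx resX1 hy resL
      refine ⟨_, _, nonsingular_add h nonsingular_P (fun e => absurd e.1 hxne),
        ?_, rX.congr rfl ?_, rY.congr rfl ?_⟩
      · rw [succ_nsmul, hQ]
        exact Point.add_of_X_ne hxne
      · rw [e_ccn, cc_one, e_ccs]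
        linear_combination ((-12 : ℂ) * ((n:ℂ)+1)⁻¹ ^ 2 + (-8 : ℂ) * (n:ℂ)⁻¹ * ((n:ℂ)+1)⁻¹ ^ 2 + (-8 : ℂ) * (n:ℂ) * ((n:ℂ)+1)⁻¹ ^ 2 + (-12 : ℂ) * (n:ℂ) * (n:ℂ)⁻¹ * ((n:ℂ)+1)⁻¹ ^ 2 + (-4 : ℂ) * (n:ℂ) ^ 2 * ((n:ℂ)+1)⁻¹ ^ 2 + (-8 : ℂ) * (n:ℂ) ^ 2 * (n:ℂ)⁻¹ * ((n:ℂ)+1)⁻¹ ^ 2 + (-4 : ℂ) * (n:ℂ) ^ 3 * (n:ℂ)⁻¹ * ((n:ℂ)+1)⁻¹ ^ 2) * h1 + ((-4 : ℂ) + (-4 : ℂ) * ((n:ℂ)+1)⁻¹ + (-4 : ℂ) * (n:ℂ) * ((n:ℂ)+1)⁻¹) * h2 + ((4 : ℂ) * (n:ℂ)⁻¹ ^ 2 * ((n:ℂ)+1)⁻¹ ^ 2 + (8 : ℂ) * (n:ℂ) * (n:ℂ)⁻¹ ^ 2 * ((n:ℂ)+1)⁻¹ ^ 2 + (12 : ℂ)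 * (n:ℂ) ^ 2 * (n:ℂ)⁻¹ ^ 2 * ((n:ℂ)+1)⁻¹ ^ 2 + (8 : ℂ) * (n:ℂ) ^ 3 * (n:ℂ)⁻¹ ^ 2 * ((n:ℂ)+1)⁻¹ ^ 2 + (4 : ℂ) * (n:ℂ) ^ 4 * (n:ℂ)⁻¹ ^ 2 * ((n:ℂ)+1)⁻¹ ^ 2) * Complex.I_sq + ((-4 : ℂ) * ((n:ℂ)+1)⁻¹ + (-4 : ℂ) * (n:ℂ)⁻¹ + (-4 : ℂ) * (n:ℂ)⁻¹ * ((n:ℂ)+1)⁻¹) * h4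
      · rw [e_ccn, cc_one, e_ddn, e_dds]
        linear_combination ((-8 : ℂ) * ((n:ℂ)+1)⁻¹ * Complex.I + (56 : ℂ) * ((n:ℂ)+1)⁻¹ ^ 3 * Complex.I + (-16 : ℂ) * (n:ℂ)⁻¹ * ((n:ℂ)+1)⁻¹ * Complex.I + (48 : ℂ) * (n:ℂ)⁻¹ * ((n:ℂ)+1)⁻¹ ^ 3 * Complex.I + (-16 : ℂ) * (n:ℂ)⁻¹ ^ 2 * ((n:ℂ)+1)⁻¹ * Complex.I + (24 : ℂ) * (n:ℂ)⁻¹ ^ 2 * ((n:ℂ)+1)⁻¹ ^ 3 * Complex.I + (-8 : ℂ) * (n:ℂ) * ((n:ℂ)+1)⁻¹ * Complex.I + (48 : ℂ) * (n:ℂ) * ((n:ℂ)+1)⁻¹ ^ 3 * Complex.I + (56 : ℂ) * (n:ℂ) * (n:ℂ)⁻¹ * ((n:ℂ)+1)⁻¹ ^ 3 * Complex.I + (-16 : ℂ) * (n:ℂ) * (n:ℂ)⁻¹ ^ 2 * ((n:ℂ)+1)⁻¹ * Complex.I + (48 : ℂ) * (n:ℂ) * (n:ℂ)⁻¹ ^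 2 * ((n:ℂ)+1)⁻¹ ^ 3 * Complex.I + (24 : ℂ) * (n:ℂ) ^ 2 * ((n:ℂ)+1)⁻¹ ^ 3 * Complex.I + (48 : ℂ) * (n:ℂ) ^ 2 * (n:ℂ)⁻¹ * ((n:ℂ)+1)⁻¹ ^ 3 * Complex.I + (56 : ℂ) * (n:ℂ) ^ 2 * (n:ℂ)⁻¹ ^ 2 * ((n:ℂ)+1)⁻¹ ^ 3 * Complex.I + (8 : ℂ) * (n:ℂ) ^ 3 * ((n:ℂ)+1)⁻¹ ^ 3 * Complex.I + (24 : ℂ) * (n:ℂ) ^ 3 * (n:ℂ)⁻¹ * ((n:ℂ)+1)⁻¹ ^ 3 * Complex.I + (48 : ℂ) * (n:ℂ) ^ 3 * (n:ℂ)⁻¹ ^ 2 * ((n:ℂ)+1)⁻¹ ^ 3 * Complex.I + (8 : ℂ) * (n:ℂ) ^ 4 * (n:ℂ)⁻¹ * ((n:ℂ)+1)⁻¹ ^ 3 * Complex.I + (24 : ℂ) * (n:ℂ) ^ 4 * (n:ℂ)⁻¹ ^ 2 * ((n:ℂ)+1)⁻¹ ^ 3 * Complex.I + (8 : ℂ)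 * (n:ℂ) ^ 5 * (n:ℂ)⁻¹ ^ 2 * ((n:ℂ)+1)⁻¹ ^ 3 * Complex.I) * h1 + ((8 : ℂ) * ((n:ℂ)+1)⁻¹ * Complex.I + (32 : ℂ) * ((n:ℂ)+1)⁻¹ ^ 2 * Complex.I + (8 : ℂ) * (n:ℂ) * ((n:ℂ)+1)⁻¹ * Complex.I + (16 : ℂ) * (n:ℂ) * ((n:ℂ)+1)⁻¹ ^ 2 * Complex.I + (8 : ℂ) * (n:ℂ) ^ 2 * ((n:ℂ)+1)⁻¹ ^ 2 * Complex.I) * h2 + ((-8 : ℂ) * (n:ℂ)⁻¹ ^ 3 * ((n:ℂ)+1)⁻¹ ^ 3 * Complex.I + (-24 : ℂ) * (n:ℂ) * (n:ℂ)⁻¹ ^ 3 * ((n:ℂ)+1)⁻¹ ^ 3 * Complex.I + (-48 : ℂ) * (n:ℂ) ^ 2 * (n:ℂ)⁻¹ ^ 3 * ((n:ℂ)+1)⁻¹ ^ 3 * Complex.I + (-56 : ℂ) * (n:ℂ) ^ 3 * (n:ℂ)⁻¹ ^ 3 * ((n:ℂ)+1)⁻¹ ^ 3 * Complex.I + (-48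 : ℂ) * (n:ℂ) ^ 4 * (n:ℂ)⁻¹ ^ 3 * ((n:ℂ)+1)⁻¹ ^ 3 * Complex.I + (-24 : ℂ) * (n:ℂ) ^ 5 * (n:ℂ)⁻¹ ^ 3 * ((n:ℂ)+1)⁻¹ ^ 3 * Complex.I + (-8 : ℂ) * (n:ℂ) ^ 6 * (n:ℂ)⁻¹ ^ 3 * ((n:ℂ)+1)⁻¹ ^ 3 * Complex.I) * Complex.I_sq + ((24 : ℂ) * ((n:ℂ)+1)⁻¹ * Complex.I + (32 : ℂ) * ((n:ℂ)+1)⁻¹ ^ 2 * Complex.I + (8 : ℂ) * (n:ℂ)⁻¹ * ((n:ℂ)+1)⁻¹ * Complex.I + (16 : ℂ) * (n:ℂ)⁻¹ * ((n:ℂ)+1)⁻¹ ^ 2 * Complex.I + (-8 : ℂ) * (n:ℂ)⁻¹ ^ 2 * Complex.I + (8 : ℂ) * (n:ℂ)⁻¹ ^ 2 * ((n:ℂ)+1)⁻¹ * Complex.I + (8 : ℂ) * (n:ℂ)⁻¹ ^ 2 * ((n:ℂ)+1)⁻¹ ^ 2 * Complex.I) * h4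

open Classical in
theorem final : ∃ h : W.Nonsingular X_P (Y_P / 2),
    ∀ n : ℕ, 0 < n → n • (Point.some _ _ h) ≠ (0 : W.Point) := by
  refine ⟨nonsingular_P, fun n hn hzero => ?_⟩
  obtain ⟨x, y, h', hQ, _, _⟩ := key n hn
  rw [show n • (Point.some _ _ nonsingular_P) = n • Q from rfl, hQ] at hzero
  exact Point.some_ne_zero h' hzero

end InfOrd


open Classical in
/-- The point `P = (X_P, Y_P/2)` on the Weierstrass curve
`W : y² = x³ - (g₂/4)x - (g₃/4)` over `ℚ(t)` has infinite order in the group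
`W(ℚ(t))`; in particular `W(ℚ(t))` has rank at least 1. -/
theorem point_of_infinite_order_on_W :
    let t : RatFunc ℚ := RatFunc.X
    let g₂ : RatFunc ℚ :=
      (4 / 3) * t ^ 8 * (1 + t ^ 2 + t ^ 4) ^ 2 *
        (1 + t ^ 2 + 4 * t ^ 4 + t ^ 6 + 7 * t ^ 8 + t ^ 10 + 4 * t ^ 12
          + t ^ 14 + t ^ 16)
    let g₃ : RatFunc ℚ :=
      -(4 / 27) * t ^ 12 * (1 + t ^ 2 + t ^ 4) ^ 4 *
        (2 + t ^ 2 + 3 * t ^ 4 + 15 * t ^ 6 - 9 * t ^ 8 + 30 * t ^ 10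
          - 9 * t ^ 12 + 15 * t ^ 14 + 3 * t ^ 16 + t ^ 18 + 2 * t ^ 20)
    let X_P : RatFunc ℚ :=
      -t ^ 4 * (1 + t ^ 2 + t ^ 4) ^ 2 *
        (2 - 5 * t ^ 2 - 2 * t ^ 4 - 2 * t ^ 6 - 2 * t ^ 8 - 5 * t ^ 10
          + 2 * t ^ 12) / (3 * (1 + t ^ 2) ^ 4)
    let Y_P : RatFunc ℚ :=
      4 * t ^ 7 * (1 + t ^ 2 + t ^ 4) ^ 2 *
        (1 + t ^ 2 + 2 * t ^ 4 + 2 * t ^ 6 + 3 * t ^ 8 + 2 * t ^ 10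
          + 3 * t ^ 12 + 2 * t ^ 14 + 2 * t ^ 16 + t ^ 18 + t ^ 20) /
        (1 + t ^ 2) ^ 6
    let W : WeierstrassCurve.Affine (RatFunc ℚ) :=
      { a₁ := 0, a₂ := 0, a₃ := 0, a₄ := -g₂ / 4, a₆ := -g₃ / 4 }
    ∃ h : W.Nonsingular X_P (Y_P / 2),
      ∀ n : ℕ, 0 < n →
        n • (WeierstrassCurve.Affine.Point.some _ _ h) ≠ (0 : W.Point) := by
  exact InfOrd.final
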